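/- For every integer N ≥ 2, lcm(1, 2, …, N) equals (1/2)·(∏_{r ∈ F_N, r ≤ 1/2} 2 sin(πr))², where F_N is the set of rationals in (0,1) with reduced denominator at most N. -/

import Mathlib

open Real Polynomial

noncomputable def cval (n : ℕ) : ℕ := ((Polynomial.cyclotomic n ℤ).eval 1).toNat

lemma cval_cast (n : ℕ) : (cval n : ℤ) = (Polynomial.cyclotomic n ℤ).eval 1 := by
  rw [cval, Int.toNat_of_nonneg (Polynomial.cyclotomic_nonneg n le_rfl)]

lemma cval_prime_pow {p k : ℕ} (hp : p.Prime) : cval (p ^ (k+1)) = p := by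
  have : Fact p.Prime := ⟨hp⟩
  rw [cval, Polynomial.eval_one_cyclotomic_prime_pow]
  simp

lemma cval_not_prime_pow {n : ℕ} (h : ¬ IsPrimePow n) (hn : 2 ≤ n) : cval n = 1 := by
  rw [cval, Polynomial.eval_one_cyclotomic_not_prime_pow]
  · simp
  · intro p hp k hk
    rcases k with _ | k
    · simp at hk; omega
    · exact h ⟨p, k+1, hp.prime, Nat.succ_pos _, hk⟩

lemma pow_dvd_lcm_iff {p k a b : ℕ} (hp : p.Prime) (ha : a ≠ 0) (hb : b ≠ 0) :
    p ^ k ∣ Nat.lcm a b ↔ p ^ k ∣ a ∨ p ^ k ∣ b := by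
  rw [hp.pow_dvd_iff_le_factorization (Nat.lcm_ne_zero ha hb),
    Nat.factorization_lcm ha hb, hp.pow_dvd_iff_le_factorization ha,
    hp.pow_dvd_iff_le_factorization hb, Finsupp.sup_apply, le_sup_iff]

lemma finset_lcm_ne_zero {s : Finset ℕ} (hs : 0 ∉ s) : s.lcm id ≠ 0 := by
  induction s using Finset.induction_on with
  | empty => simp
  | @insert a s hnotmem ih =>
    rw [Finset.lcm_insert]
    simp only [Finset.mem_insert, not_or] at hs
    have := ih hs.2
    simp only [id, lcm_eq_nat_lcm] at *
    exact Nat.lcm_ne_zero (Ne.symm hs.1) this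

lemma pow_dvd_finset_lcm {p k : ℕ} (hp : p.Prime) (hk : k ≠ 0) {s : Finset ℕ} (hs : 0 ∉ s)
    (h : p ^ k ∣ s.lcm id) : ∃ a ∈ s, p ^ k ∣ a := by
  induction s using Finset.induction_on with
  | empty =>
    exfalso
    simp only [Finset.lcm_empty, Nat.dvd_one, pow_eq_one_iff_left hk] at h
    exact hp.one_lt.ne' h
  | @insert a s hnotmem ih =>
    simp only [Finset.mem_insert, not_or] at hs
    rw [Finset.lcm_insert] at h
    simp only [id, lcm_eq_nat_lcm] at h
    rw [pow_dvd_lcm_iff hp (Ne.symm hs.1) (finset_lcm_ne_zero hs.2)] at h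
    rcases h with h | h
    · exact ⟨a, Finset.mem_insert_self _ _, h⟩
    · obtain ⟨b, hb, hd⟩ := ih hs.2 h
      exact ⟨b, Finset.mem_insert_of_mem hb, hd⟩

lemma lcm_step {n : ℕ} (hn : 2 ≤ n) :
    Nat.lcm n ((Finset.Icc 1 (n-1)).lcm id) = cval n * ((Finset.Icc 1 (n-1)).lcm id) := by
  set L := (Finset.Icc 1 (n-1)).lcm id with hLdef
  have h0 : (0:ℕ) ∉ Finset.Icc 1 (n-1) := by simp
  by_cases hpp : IsPrimePow n
  · obtain ⟨p, k, hp, hk, hn'⟩ := hpp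
    rw [← Nat.prime_iff] at hp
    have hk1 : k - 1 + 1 = k := by omega
    have hcv : cval n = p := by
      rw [← hn', ← hk1, cval_prime_pow hp]
    have hd1 : p ^ (k-1) ∣ L := by
      apply Finset.dvd_lcm
      simp only [Finset.mem_Icc]
      constructor
      · exact Nat.one_le_iff_ne_zero.mpr (pow_ne_zero _ hp.pos.ne')
      · have : p ^ (k-1) < p ^ k := Nat.pow_lt_pow_right hp.one_lt (by omega)
        omega
    have hd2 : ¬ p ^ k ∣ L := by
      intro hdvd
      obtain ⟨a, ha, hpa⟩ := pow_dvd_finset_lcm hp (by omega) h0 hdvd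
      simp only [Finset.mem_Icc] at ha
      have := Nat.le_of_dvd (by omega) hpa
      omega
    set M := L / p ^ (k-1) with hM
    have hLM : L = p ^ (k-1) * M := by
      rw [hM, Nat.mul_div_cancel' hd1]
    have hpM : ¬ p ∣ M := by
      intro hdvd
      apply hd2
      rw [hLM, ← hk1, pow_succ]
      exact Nat.mul_dvd_mul_left _ hdvd
    have hnpk : n = p ^ (k-1) * p := by rw [← hn', ← pow_succ, hk1]
    have hlcm : Nat.lcm n L = p * L := by
      rw [hnpk, hLM, Nat.lcm_mul_left]
      have hco : Nat.Coprime p M := (Nat.Prime.coprime_iff_not_dvd hp).mpr hpM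
      rw [hco.lcm_eq_mul]
      ring
    rw [hlcm, hcv]
  · rw [cval_not_prime_pow hpp hn, one_mul]
    -- need n ∣ L
    have hdvd : n ∣ L := by
      set p := n.minFac with hpdef
      have hp : p.Prime := Nat.minFac_prime (by omega)
      have hpn : p ∣ n := Nat.minFac_dvd n
      set v := n.factorization p with hv
      have hv1 : 1 ≤ v := by
        rw [hv, ← Nat.Prime.pow_dvd_iff_le_factorization hp (by omega), pow_one]
        exact hpn
      have hab : p ^ v * (n / p ^ v) = n := Nat.ordProj_mul_ordCompl_eq_self n p
      have hbdvd : (n / p ^ v) ∣ n := Nat.ordCompl_dvd n p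
      have hadvd : p ^ v ∣ n := Nat.ordProj_dvd n p
      have hbne : n / p ^ v ≠ 1 := by
        intro h1
        exact hpp ⟨p, v, hp.prime, by omega, by rw [← hab, h1, mul_one]⟩
      have hbpos : 0 < n / p ^ v := Nat.ordCompl_pos p (by omega)
      have hppos : 2 ≤ p ^ v := by
        calc 2 ≤ p := hp.two_le
        _ = p ^ 1 := (pow_one p).symm
        _ ≤ p ^ v := Nat.pow_le_pow_right hp.pos hv1
      have halt : p ^ v < n := by
        refine Nat.lt_of_le_of_ne (Nat.le_of_dvd (by omega) hadvd) (fun he => hbne ?_)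
        rw [he, Nat.div_self (by omega)]
      have hblt : n / p ^ v < n := Nat.div_lt_self (by omega) (by omega)
      have hda : p ^ v ∣ L := Finset.dvd_lcm (by simp only [Finset.mem_Icc]; omega)
      have hdb : (n / p ^ v) ∣ L := Finset.dvd_lcm (by simp only [Finset.mem_Icc]; omega)
      have hcop : Nat.Coprime (p ^ v) (n / p ^ v) :=
        Nat.Coprime.pow_left _ (Nat.coprime_ordCompl hp (by omega))
      rw [← hab]
      exact Nat.Coprime.mul_dvd_of_dvd_of_dvd hcop hda hdb
    exact Nat.dvd_antisymm (Nat.lcm_dvd hdvd dvd_rfl) (Nat.dvd_lcm_right _ _)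

lemma lcm_eq_prod_cval (N : ℕ) : (Finset.Icc 1 N).lcm id = ∏ n ∈ Finset.Icc 2 N, cval n := by
  induction N with
  | zero => simp
  | succ N ih =>
    rcases Nat.lt_or_ge N 1 with h | h
    · interval_cases N
      · simp [Finset.Icc_self]
    · have h1 : Finset.Icc 1 (N+1) = insert (N+1) (Finset.Icc 1 N) := by
        exact (Finset.insert_Icc_right_eq_Icc_add_one (by omega)).symm
      have h2 : Finset.Icc 2 (N+1) = insert (N+1) (Finset.Icc 2 N) := by
        exact (Finset.insert_Icc_right_eq_Icc_add_one (by omega)).symm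
      rw [h1, h2, Finset.lcm_insert, Finset.prod_insert (by simp)]
      have hstep := lcm_step (n := N+1) (by omega)
      simp only [Nat.add_sub_cancel] at hstep
      rw [← ih]
      simp only [id, lcm_eq_nat_lcm]
      rw [hstep]



lemma abs_one_sub_exp {θ : ℝ} (h0 : 0 ≤ θ) (h1 : θ ≤ 2*π) :
    ‖1 - Complex.exp (θ * Complex.I)‖ = 2 * Real.sin (θ/2) := by
  rw [Complex.exp_mul_I]
  have h2 : (1 : ℂ) - (Complex.cos θ + Complex.sin θ * Complex.I)
      = ((1 - Real.cos θ : ℝ) : ℂ) + ((-Real.sin θ : ℝ) : ℂ) * Complex.I := by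
    rw [Complex.ofReal_sub, Complex.ofReal_cos, Complex.ofReal_neg, Complex.ofReal_sin]
    push_cast
    ring
  rw [h2, Complex.norm_add_mul_I, Real.sin_half_eq_sqrt h0 h1]
  rw [show (1-Real.cos θ)^2 + (-Real.sin θ)^2 = 2^2 * ((1 - Real.cos θ)/2) by
    nlinarith [Real.sin_sq_add_cos_sq θ]]
  rw [Real.sqrt_mul (by positivity), Real.sqrt_sq (by norm_num)]

open Complex in
lemma prod_sin_eq_cval {n : ℕ} (hn : 2 ≤ n) :
    ∏ k ∈ (Finset.Ico 1 n).filter (fun k => Nat.Coprime k n),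
      (2 * Real.sin (π * k / n)) = (cval n : ℝ) := by
  have hn0 : n ≠ 0 := by omega
  have hnpos : 0 < n := by omega
  have : NeZero n := ⟨hn0⟩
  set ζ := Complex.exp (2 * π * Complex.I / n) with hζdef
  have hζ : IsPrimitiveRoot ζ n := Complex.isPrimitiveRoot_exp n hn0
  have hcyc : (Polynomial.cyclotomic n ℂ).eval 1 = ∏ μ ∈ primitiveRoots n ℂ, (1 - μ) := by
    rw [Polynomial.cyclotomic_eq_prod_X_sub_primitiveRoots hζ]
    simp [Polynomial.eval_prod]
  have hreindex : ∏ μ ∈ primitiveRoots n ℂ, (1 - μ)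
      = ∏ k ∈ (Finset.Ico 1 n).filter (fun k => Nat.Coprime k n), (1 - ζ ^ k) := by
    refine (Finset.prod_nbij (fun k => ζ ^ k) ?_ ?_ ?_ ?_).symm
    · intro k hk
      simp only [Finset.mem_filter, Finset.mem_Ico] at hk
      rw [mem_primitiveRoots hnpos]
      exact (hζ.pow_iff_coprime hnpos k).mpr hk.2
    · intro a ha b hb hab
      simp only [Finset.mem_coe, Finset.mem_filter, Finset.mem_Ico] at ha hb
      exact hζ.pow_inj ha.1.2 hb.1.2 hab
    · intro μ hμ
      simp only [Finset.coe_filter, Set.mem_image, Set.mem_setOf_eq]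
      rw [Finset.mem_coe, mem_primitiveRoots hnpos] at hμ
      obtain ⟨i, hi, rfl⟩ := hζ.eq_pow_of_pow_eq_one hμ.pow_eq_one
      refine ⟨i, ⟨Finset.mem_Ico.mpr ⟨?_, hi⟩, (hζ.pow_iff_coprime hnpos i).mp hμ⟩, rfl⟩
      by_contra h
      have hi0 : i = 0 := by omega
      rw [hi0, pow_zero] at hμ
      have := Nat.le_of_dvd one_pos (hμ.dvd_of_pow_eq_one 1 (one_pow 1))
      omega
    · intro k hk
      rfl
  -- eval over ℂ equals cast of eval over ℤ
  have hcast : (Polynomial.cyclotomic n ℂ).eval 1 = ((cval n : ℤ) : ℂ) := by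
    rw [cval_cast]
    have := Polynomial.eval_intCast_map (Int.castRingHom ℂ) (Polynomial.cyclotomic n ℤ) 1
    simpa only [Polynomial.map_cyclotomic, Int.cast_one, eq_intCast] using this
  have habs : (cval n : ℝ) = ‖(Polynomial.cyclotomic n ℂ).eval 1‖ := by
    rw [hcast]
    push_cast
    rw [Complex.norm_natCast]
  rw [habs, hcyc, hreindex, Complex.norm_prod]
  refine Finset.prod_congr rfl ?_
  intro k hk
  simp only [Finset.mem_filter, Finset.mem_Ico] at hk
  have hζk : ζ ^ k = Complex.exp ((2 * π * k / n : ℝ) * Complex.I) := by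
    rw [hζdef, ← Complex.exp_nat_mul]
    congr 1
    push_cast
    ring
  rw [hζk, abs_one_sub_exp (by positivity)]
  · congr 1
    field_simp
  · rw [div_le_iff₀ (by positivity)]
    have hk2 : (k : ℝ) ≤ n := by exact_mod_cast hk.1.2.le
    nlinarith [Real.pi_pos]

def farey (N : ℕ) : Finset ℚ :=
  (Finset.Icc 1 N).biUnion
    (fun n => ((Finset.Ico 1 n).filter (fun k => Nat.Coprime k n)).image (fun k : ℕ => (k : ℚ)/(n:ℚ)))

lemma den_mk' {k n : ℕ} (hn : 0 < n) (hco : Nat.Coprime k n) : ((k:ℚ)/n).den = n := by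
  have h := Rat.den_div_eq_of_coprime (a := (k:ℤ)) (b := (n:ℤ)) (by exact_mod_cast hn)
    (by simpa using hco)
  push_cast at h
  exact_mod_cast h

lemma num_mk' {k n : ℕ} (hn : 0 < n) (hco : Nat.Coprime k n) : ((k:ℚ)/n).num = k := by
  have h := Rat.num_div_eq_of_coprime (a := (k:ℤ)) (b := (n:ℤ)) (by exact_mod_cast hn)
    (by simpa using hco)
  push_cast at h
  exact_mod_cast h

lemma mem_farey {N : ℕ} {r : ℚ} : r ∈ farey N ↔ 0 < r ∧ r < 1 ∧ r.den ≤ N := by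
  constructor
  · intro hr
    simp only [farey, Finset.mem_biUnion, Finset.mem_image, Finset.mem_filter,
      Finset.mem_Ico, Finset.mem_Icc] at hr
    obtain ⟨n, hn, k, ⟨⟨hk1, hkn⟩, hco⟩, rfl⟩ := hr
    have hnpos : (0:ℚ) < n := by exact_mod_cast (by omega : 0 < n)
    refine ⟨by positivity, ?_, ?_⟩
    · rw [div_lt_one hnpos]
      exact_mod_cast hkn
    · rw [den_mk' (by omega) hco]
      exact hn.2
  · rintro ⟨h0, h1, hden⟩
    have hnum : 0 < r.num := Rat.num_pos.mpr h0
    have hlt : r.num < (r.den : ℤ) := by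
      have hd : (0:ℚ) < (r.den:ℚ) := by exact_mod_cast r.pos
      have h2 : (r.num : ℚ) < (r.den : ℚ) := by
        rw [← Rat.num_div_den r] at h1
        exact (div_lt_one hd).mp h1
      exact_mod_cast h2
    simp only [farey, Finset.mem_biUnion, Finset.mem_image, Finset.mem_filter,
      Finset.mem_Ico, Finset.mem_Icc]
    refine ⟨r.den, ⟨r.pos, hden⟩, r.num.toNat, ⟨⟨by omega, by omega⟩, ?_⟩, ?_⟩
    · have hred := r.reduced
      have he : r.num.toNat = r.num.natAbs := by omega
      rwa [he]
    · have he : (r.num.toNat : ℤ) = r.num := Int.toNat_of_nonneg hnum.le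
      calc ((r.num.toNat : ℚ)) / (r.den : ℚ) = ((r.num : ℚ)) / (r.den:ℚ) := by
            congr 1; exact_mod_cast he
      _ = r := Rat.num_div_den r

lemma den_one_sub (q : ℚ) : (1 - q).den = q.den := by
  have hred : Int.gcd q.num (q.den : ℤ) = 1 := q.reduced
  have hco1 : IsCoprime (q.num) ((q.den : ℤ)) := Int.isCoprime_iff_gcd_eq_one.mpr hred
  have hco2 : IsCoprime ((q.den : ℤ) - q.num) ((q.den : ℤ)) := by
    have h := (hco1.neg_left).add_mul_left_left 1
    simpa [mul_one, sub_eq_neg_add] using h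
  have hgcd : Int.gcd ((q.den : ℤ) - q.num) ((q.den : ℤ)) = 1 :=
    Int.isCoprime_iff_gcd_eq_one.mp hco2
  have hd0 : (0:ℤ) < (q.den : ℤ) := by exact_mod_cast q.pos
  have heq : (1:ℚ) - q = (((q.den : ℤ) - q.num : ℤ) : ℚ) / ((q.den : ℤ) : ℚ) := by
    push_cast
    rw [sub_div, div_self (by exact_mod_cast q.pos.ne'), Rat.num_div_den]
  have h := Rat.den_div_eq_of_coprime hd0 hgcd
  rw [heq]
  exact_mod_cast h

lemma prod_farey (N : ℕ) (f : ℚ → ℝ) :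
    ∏ r ∈ farey N, f r =
      ∏ n ∈ Finset.Icc 1 N, ∏ k ∈ (Finset.Ico 1 n).filter (fun k => Nat.Coprime k n),
        f ((k : ℚ)/(n : ℚ)) := by
  rw [farey, Finset.prod_biUnion, Finset.prod_congr rfl]
  · intro n hn
    rw [Finset.prod_image]
    intro a ha b hb hab
    simp only [Finset.mem_coe, Finset.mem_filter, Finset.mem_Ico] at ha hb
    have hn0 : (0:ℚ) < (n:ℚ) := by exact_mod_cast (by omega : 0 < n)
    field_simp at hab
    exact_mod_cast hab
  · intro a ha b hb hne
    simp only [Function.onFun, Finset.disjoint_left]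
    intro r hr hr'
    simp only [Finset.mem_image, Finset.mem_filter, Finset.mem_Ico] at hr hr'
    obtain ⟨k, ⟨⟨hk1, hka⟩, hkco⟩, rfl⟩ := hr
    obtain ⟨j, ⟨⟨hj1, hjb⟩, hjco⟩, hj⟩ := hr'
    apply hne
    have hda : ((k:ℚ)/(a:ℚ)).den = a := den_mk' (by omega) hkco
    have hdb : ((j:ℚ)/(b:ℚ)).den = b := den_mk' (by omega) hjco
    rw [← hda, ← hj, hdb]

theorem lcm_eq_sin_prod (N : ℕ) (hN : 2 ≤ N) :
    (((Finset.Icc 1 N).lcm id : ℕ) : ℝ) =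
      (1 / 2) *
        (∏ᶠ r ∈ {r : ℚ | 0 < r ∧ r < 1 ∧ r.den ≤ N ∧ r ≤ 1 / 2},
            (2 * Real.sin (π * (r : ℝ)))) ^ 2 := by
  set g : ℚ → ℝ := fun r => 2 * Real.sin (π * (r:ℝ)) with hg
  have hset : {r : ℚ | 0 < r ∧ r < 1 ∧ r.den ≤ N ∧ r ≤ 1 / 2}
      = ↑((farey N).filter (fun r => r ≤ 1/2)) := by
    ext r
    simp only [Set.mem_setOf_eq, Finset.coe_filter, mem_farey]
    tauto
  rw [hset, finprod_mem_coe_finset]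
  set F := (farey N).filter (fun r => r ≤ 1/2) with hF
  set F' := (farey N).filter (fun r => r < 1/2) with hF'
  set P := ∏ r ∈ F', g r with hP
  have hdenhalf : ((1:ℚ)/2).den = 2 := by
    have := den_mk' (k := 1) (n := 2) (by norm_num) (Nat.coprime_one_left 2)
    simpa using this
  have hhalf : (1/2 : ℚ) ∈ farey N := by
    rw [mem_farey, hdenhalf]
    norm_num
    omega
  have hFinsert : F = insert (1/2 : ℚ) F' := by
    ext r
    simp only [hF, hF', Finset.mem_insert, Finset.mem_filter]
    constructor
    · rintro ⟨h1, h2⟩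
      rcases lt_or_eq_of_le h2 with h | h
      · exact Or.inr ⟨h1, h⟩
      · exact Or.inl h
    · rintro (rfl | ⟨h1, h2⟩)
      · exact ⟨hhalf, le_refl _⟩
      · exact ⟨h1, h2.le⟩
  have hnotmem : (1/2 : ℚ) ∉ F' := by
    simp [hF', Finset.mem_filter]
  have hghalf : g (1/2) = 2 := by
    have : (((1:ℚ)/2 : ℚ) : ℝ) = 1/2 := by norm_num
    rw [hg]
    simp only [this]
    rw [show π * (1/2 : ℝ) = π/2 by ring, Real.sin_pi_div_two]
    norm_num
  have hProdF : ∏ r ∈ F, g r = 2 * P := by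
    rw [hFinsert, Finset.prod_insert hnotmem, hghalf, hP]
  have hsym : ∏ r ∈ (farey N).filter (fun r => ¬ r ≤ 1/2), g r = P := by
    rw [hP]
    refine Finset.prod_nbij' (fun r => 1 - r) (fun r => 1 - r) ?_ ?_ ?_ ?_ ?_
    · intro r hr
      simp only [hF', Finset.mem_filter, mem_farey, not_le] at hr ⊢
      obtain ⟨⟨h0, h1, hd⟩, hhalf2⟩ := hr
      refine ⟨⟨by linarith, by linarith, ?_⟩, by linarith⟩
      rw [den_one_sub]
      exact hd
    · intro r hr
      simp only [hF', Finset.mem_filter, mem_farey, not_le] at hr ⊢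
      obtain ⟨⟨h0, h1, hd⟩, hhalf2⟩ := hr
      refine ⟨⟨by linarith, by linarith, ?_⟩, by linarith⟩
      rw [den_one_sub]
      exact hd
    · intro r _
      ring
    · intro r _
      ring
    · intro r _
      rw [hg]
      simp only
      have hc : (((1:ℚ) - r : ℚ) : ℝ) = 1 - (r:ℝ) := by push_cast; ring
      rw [hc, show π * (1 - (r:ℝ)) = π - π * (r:ℝ) by ring, Real.sin_pi_sub]
  have htot : ∏ r ∈ farey N, g r = 2 * P * P := by
    rw [← Finset.prod_filter_mul_prod_filter_not (farey N) (fun r => r ≤ 1/2) g]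
    rw [← hF, hProdF, hsym]
  have hlcm : (((Finset.Icc 1 N).lcm id : ℕ) : ℝ) = ∏ r ∈ farey N, g r := by
    rw [lcm_eq_prod_cval, prod_farey N g, Nat.cast_prod]
    rw [show Finset.Icc 1 N = insert 1 (Finset.Icc 2 N) from (Finset.insert_Icc_add_one_left_eq_Icc (by omega)).symm]
    rw [Finset.prod_insert (by simp)]
    simp only [Finset.Ico_self, Finset.filter_empty, Finset.prod_empty, one_mul]
    refine Finset.prod_congr rfl ?_
    intro n hn
    simp only [Finset.mem_Icc] at hn
    rw [← prod_sin_eq_cval hn.1]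
    refine Finset.prod_congr rfl ?_
    intro k hk
    rw [hg]
    simp only
    congr 1
    push_cast
    ring
  rw [hlcm, htot, hProdF]
  ring
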